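/- Let 0 < r < c be real numbers. There exists t₀ ∈ (0,1) such that for every t ∈ (0, t₀) and every θ ∈ ℝ, the set of a ∈ ℂ with 0 < |a| < 1 for which there exist η₀, η₁, η₂ ∈ ℂ with |ηⱼ| < 1 for each j and ζ ∈ ℂ with |ζ| > 1 satisfying both the polynomial identity r(w − a) + c·w³·(1 − conj(a)·w) = −c·conj(a)·(w − ζ)(w − η₀)(w − η₁)(w − η₂) for all w ∈ ℂ, and the constraint a·r·((1−t)/t)²·(η₀η₁η₂)³ = e^{6iθ}, has exactly four elements. -/

import Mathlib

set_option maxHeartbeats 1600000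
open Complex Metric Set Polynomial

noncomputable def Complex.abs : AbsoluteValue ℂ ℝ := NormedField.toAbsoluteValue ℂ

lemma Complex.norm_eq_abs (z : ℂ) : ‖z‖ = Complex.abs z := rfl

lemma Complex.dist_eq_abs (z w : ℂ) : dist z w = Complex.abs (z - w) := Complex.dist_eq z w

@[simp]
lemma Complex.abs_two : Complex.abs (2 : ℂ) = 2 := by rw [← Complex.norm_eq_abs]; norm_num

@[simp]
lemma Complex.abs_three : Complex.abs (3 : ℂ) = 3 := by rw [← Complex.norm_eq_abs]; norm_num

lemma Complex.abs_conj (z : ℂ) : Complex.abs ((starRingEnd ℂ) z) = Complex.abs z :=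
  Complex.norm_conj z

lemma Complex.abs_ofReal (x : ℝ) : Complex.abs (x : ℂ) = |x| := Complex.norm_real x

lemma Complex.abs_I : Complex.abs Complex.I = 1 := Complex.norm_I

lemma Complex.abs_exp_ofReal_mul_I (x : ℝ) : Complex.abs (Complex.exp (x * Complex.I)) = 1 :=
  Complex.norm_exp_ofReal_mul_I x

lemma Complex.abs_exp (z : ℂ) : Complex.abs (Complex.exp z) = Real.exp z.re := Complex.norm_exp z

lemma Complex.abs_re_le_abs (z : ℂ) : |z.re| ≤ Complex.abs z := Complex.abs_re_le_norm z

lemma Complex.abs_im_le_abs (z : ℂ) : |z.im| ≤ Complex.abs z := Complex.abs_im_le_norm z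


noncomputable def P34 (z : ℂ) : ℂ := Complex.exp ((3/4 : ℂ) * Complex.log z)

lemma P34_one : P34 1 = 1 := by simp [P34]

lemma P34_ne_zero (z : ℂ) : P34 z ≠ 0 := Complex.exp_ne_zero _

lemma P34_pow {z : ℂ} (hz : z ≠ 0) : (P34 z) ^ 4 = z ^ 3 := by
  rw [P34, ← Complex.exp_nat_mul]
  have : ((4 : ℕ) : ℂ) * ((3/4 : ℂ) * Complex.log z) = (3 : ℕ) * Complex.log z := by
    push_cast; ring
  rw [this, Complex.exp_nat_mul, Complex.exp_log hz]

lemma mem_ball_re {x : ℂ} (hx : x ∈ closedBall (1 : ℂ) (1/10)) :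
    9/10 ≤ x.re ∧ Complex.abs x ≤ 11/10 ∧ 9/10 ≤ Complex.abs x := by
  rw [mem_closedBall, Complex.dist_eq_abs] at hx
  have h1 : |(x - 1).re| ≤ Complex.abs (x - 1) := Complex.abs_re_le_abs _
  have h2 : Complex.abs x ≤ Complex.abs (x - 1) + 1 := by
    simpa using Complex.abs.add_le (x - 1) 1
  have h3 : (1 : ℝ) ≤ Complex.abs (x - 1) + Complex.abs x := by
    have := Complex.abs.add_le (1 - x) x
    simp only [sub_add_cancel, map_one] at this
    have he : Complex.abs (1 - x) = Complex.abs (x - 1) := by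
      rw [show (1:ℂ) - x = -(x-1) by ring, map_neg_eq_map]
    linarith
  simp only [Complex.sub_re, Complex.one_re] at h1
  constructor
  · cases abs_le.mp h1 with | intro hl hr => linarith
  constructor
  · linarith
  · linarith

lemma P34_lip {z w : ℂ} (hz : z ∈ closedBall (1 : ℂ) (1/10))
    (hw : w ∈ closedBall (1 : ℂ) (1/10)) :
    ‖P34 z - P34 w‖ ≤ 2 * ‖z - w‖ := by
  have key : ∀ x ∈ closedBall (1 : ℂ) (1/10),
      HasDerivWithinAt P34 (Complex.exp ((3/4 : ℂ) * Complex.log x) * ((3/4 : ℂ) * x⁻¹))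
        (closedBall (1 : ℂ) (1/10)) x := by
    intro x hx
    have hre := (mem_ball_re hx).1
    have hsp : x ∈ Complex.slitPlane := Or.inl (by linarith)
    exact (((Complex.hasDerivAt_log hsp).const_mul (3/4 : ℂ)).cexp).hasDerivWithinAt
  have bound : ∀ x ∈ closedBall (1 : ℂ) (1/10),
      ‖Complex.exp ((3/4 : ℂ) * Complex.log x) * ((3/4 : ℂ) * x⁻¹)‖ ≤ 2 := by
    intro x hx
    obtain ⟨hre, hxu, hxl⟩ := mem_ball_re hx
    have hx0 : Complex.abs x ≠ 0 := by positivity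
    have hlog : Real.log (Complex.abs x) ≤ 1/10 := by
      have := Real.log_le_sub_one_of_pos (x := Complex.abs x) (by linarith)
      linarith
    have hexp : Real.exp ((3:ℝ)/4 * Real.log (Complex.abs x)) ≤ 40/37 := by
      have h1 : Real.exp (-(3/40 : ℝ)) ≥ 37/40 := by
        have := Real.add_one_le_exp (-(3/40 : ℝ)); linarith
      have h2 : (3:ℝ)/4 * Real.log (Complex.abs x) ≤ 3/40 := by nlinarith
      calc Real.exp ((3:ℝ)/4 * Real.log (Complex.abs x)) ≤ Real.exp (3/40) :=
            Real.exp_le_exp.mpr h2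
        _ ≤ 40/37 := by
            rw [show (3/40 : ℝ) = -(-(3/40)) by ring, Real.exp_neg]
            rw [inv_le_comm₀ (by positivity) (by norm_num)]
            linarith
    have hnre : ((3/4 : ℂ) * Complex.log x).re = (3:ℝ)/4 * Real.log (Complex.abs x) := by
      simp [Complex.mul_re, Complex.log_re]; rfl
    have hinv : ‖x⁻¹‖ ≤ 10/9 := by
      rw [norm_inv]
      rw [inv_le_comm₀ (by simpa [Complex.norm_eq_abs] using (by linarith : (0:ℝ) < Complex.abs x)) (by norm_num)]
      simpa [Complex.norm_eq_abs] using by linarith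
    calc ‖Complex.exp ((3/4 : ℂ) * Complex.log x) * ((3/4 : ℂ) * x⁻¹)‖
        = Real.exp ((3:ℝ)/4 * Real.log (Complex.abs x)) * ((3/4) * ‖x⁻¹‖) := by
          rw [norm_mul, norm_mul, Complex.norm_eq_abs (Complex.exp _), Complex.abs_exp, hnre]
          norm_num [Complex.norm_eq_abs]
      _ ≤ (40/37) * ((3/4) * (10/9)) := by
          have h0 : (0:ℝ) ≤ ‖x⁻¹‖ := norm_nonneg _
          have he : (0:ℝ) < Real.exp ((3:ℝ)/4 * Real.log (Complex.abs x)) := Real.exp_pos _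
          nlinarith
      _ ≤ 2 := by norm_num
  exact Convex.norm_image_sub_le_of_norm_hasDerivWithin_le key bound (convex_closedBall _ _) hw hz

lemma root_dichotomy (r c ε : ℝ) (a w : ℂ) (hr : 0 < r) (hrc : r < c)
    (hε0 : 0 < ε) (hε1 : ε ≤ 1/100) (hε2 : 3*ε*c ≤ c - r)
    (ha : Complex.abs a ≤ ε)
    (hw : r*(w-a) + c*w^3*(1 - (starRingEnd ℂ) a * w) = 0) :
    Complex.abs w < 1 ∨ (1/2 < Complex.abs a * Complex.abs w ∧
      Complex.abs ((starRingEnd ℂ) a * w - 1) ≤ 8*(r/c)*(Complex.abs a)^2) := by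
  by_cases hlt : Complex.abs w < 1
  · exact Or.inl hlt
  push_neg at hlt
  have hc0 : (0:ℝ) < c := by linarith
  have habs2 : Complex.abs ((starRingEnd ℂ) a * w - 1)
      = Complex.abs (1 - (starRingEnd ℂ) a * w) := by
    rw [show (starRingEnd ℂ) a * w - 1 = -(1 - (starRingEnd ℂ) a * w) by ring,
      map_neg_eq_map]
  have key : c * (Complex.abs w)^3 * Complex.abs (1 - (starRingEnd ℂ) a * w)
      = r * Complex.abs (w - a) := by
    have h1 : (c:ℂ)*w^3*(1 - (starRingEnd ℂ) a * w) = -(r*(w-a)) := by linear_combination hw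
    have h2 := congrArg Complex.abs h1
    simp only [map_mul, map_neg_eq_map, map_pow, Complex.abs_ofReal] at h2
    rw [abs_of_pos hc0, abs_of_pos hr] at h2
    linarith [h2]
  have hwa : Complex.abs (w - a) ≤ Complex.abs w + ε := by
    have h := Complex.abs.add_le w (-a)
    rw [map_neg_eq_map] at h
    rw [show w - a = w + -a by ring]
    linarith
  have haw : Complex.abs ((starRingEnd ℂ) a * w) = Complex.abs a * Complex.abs w := by
    rw [map_mul, Complex.abs_conj]
  have h1aw' := Complex.abs.add_le (1 - (starRingEnd ℂ) a * w) ((starRingEnd ℂ) a * w)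
  simp only [sub_add_cancel, map_one] at h1aw'
  rw [haw] at h1aw'
  set s := Complex.abs w with hs
  set X := Complex.abs (1 - (starRingEnd ℂ) a * w) with hXdef
  set A := Complex.abs a with hA
  clear_value s X A
  have hs0 : (0:ℝ) < s := by linarith
  have hX0 : (0:ℝ) ≤ X := hXdef ▸ Complex.abs.nonneg _
  have ha0 : (0:ℝ) ≤ A := hA ▸ Complex.abs.nonneg _
  have hkey2 : c * s^3 * X ≤ r * (s + ε) := by
    rw [key]; nlinarith
  have hc3 : (0:ℝ) ≤ c * s^3 := by positivity
  have hs3 : s ≤ s^3 := by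
    nlinarith [mul_nonneg (mul_nonneg hs0.le (by linarith : (0:ℝ) ≤ s - 1))
      (by linarith : (0:ℝ) ≤ s + 1)]
  by_cases hsm : A * s ≤ 1/2
  · exfalso
    have h1aw : 1 - A * s ≤ X := by linarith
    rcases le_or_gt s 2 with h2 | h2
    · have has : A * s ≤ 2*ε := by nlinarith
      have hXl : 1 - 2*ε ≤ X := by linarith
      have hA1 : c*s^3*(1-2*ε) ≤ c*s^3*X := by
        nlinarith [mul_nonneg hc3 (by linarith : (0:ℝ) ≤ X - (1-2*ε))]
      have hA2 : r*(s+ε) ≤ r*s*(1+ε) := by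
        nlinarith [mul_nonneg (mul_nonneg hr.le hε0.le) (by linarith : (0:ℝ) ≤ s - 1)]
      have hB : c*s*(1-2*ε) ≤ c*s^3*(1-2*ε) := by
        nlinarith [mul_nonneg (mul_nonneg hc0.le (by linarith : (0:ℝ) ≤ s^3 - s))
          (by linarith : (0:ℝ) ≤ 1-2*ε)]
      have hC : c*(1-2*ε) ≤ r*(1+ε) := by
        by_contra h
        push_neg at h
        nlinarith [mul_lt_mul_of_pos_left h hs0]
      nlinarith [mul_pos hε0 hc0, mul_pos hε0 hr, mul_lt_mul_of_pos_left hrc hε0]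
    · have hXl : (1:ℝ)/2 ≤ X := by linarith
      have hA1 : c*s^3*(1/2) ≤ c*s^3*X := by
        nlinarith [mul_nonneg hc3 (by linarith : (0:ℝ) ≤ X - 1/2)]
      have hA2 : r*(s+ε) ≤ 2*r*s := by nlinarith
      have hB : 2*s^2 ≤ s^3 := by
        nlinarith [mul_nonneg (sq_nonneg s) (by linarith : (0:ℝ) ≤ s - 2)]
      have hC : c*s^2 ≤ 2*r*s := by nlinarith
      have hD : c*s ≤ 2*r := by
        by_contra h
        push_neg at h
        nlinarith [mul_lt_mul_of_pos_right h hs0]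
      nlinarith
  · push_neg at hsm
    right
    refine ⟨hsm, ?_⟩
    rw [habs2]
    rw [show 8*(r/c)*A^2 = 8*r*A^2/c by ring, le_div_iff₀ hc0]
    have h1 : c * s^3 * X ≤ 2*r*s := by nlinarith
    have hA' : c * X * s^2 ≤ 2*r := by
      by_contra h
      push_neg at h
      nlinarith [mul_lt_mul_of_pos_right h hs0]
    have hB : (1:ℝ) ≤ 4*A^2*s^2 := by nlinarith
    nlinarith [mul_le_mul_of_nonneg_left hA' (by positivity : (0:ℝ) ≤ 4*A^2),
      mul_le_mul_of_nonneg_left hB (by positivity : (0:ℝ) ≤ X*c)]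

lemma fact_sum (r c : ℝ) (a z1 z2 z3 z4 : ℂ) (hc : 0 < c)
    (hid : ∀ w : ℂ, r*(w-a) + c*w^3*(1 - (starRingEnd ℂ) a * w) =
      -c * (starRingEnd ℂ) a * (w-z1)*(w-z2)*(w-z3)*(w-z4)) :
    (starRingEnd ℂ) a * (z1+z2+z3+z4) = 1 := by
  have hc0 : (c:ℂ) ≠ 0 := by
    simpa using ne_of_gt hc
  have e1 := hid 1
  have e2 := hid (-1)
  have e3 := hid 2
  have e4 := hid (-2)
  have h : (c:ℂ) * ((starRingEnd ℂ) a * (z1+z2+z3+z4)) = c * 1 := by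
    linear_combination (-(1:ℂ)/12)*e3 + ((1:ℂ)/12)*e4 + ((1:ℂ)/6)*e1 - ((1:ℂ)/6)*e2
  exact mul_left_cancel₀ hc0 h

lemma fact_prod (r c : ℝ) (a z1 z2 z3 z4 : ℂ)
    (hid : ∀ w : ℂ, r*(w-a) + c*w^3*(1 - (starRingEnd ℂ) a * w) =
      -c * (starRingEnd ℂ) a * (w-z1)*(w-z2)*(w-z3)*(w-z4)) :
    (c:ℂ) * (starRingEnd ℂ) a * (z1*z2*z3*z4) = r * a := by
  linear_combination hid 0

lemma sum_contradiction (x y z w : ℂ) (hsum : x + y + z + w = 1)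
    (hx : Complex.abs (x - 1) ≤ 1/10) (hy : Complex.abs (y - 1) ≤ 1/10)
    (hz : Complex.abs z ≤ 1/10 ∨ Complex.abs (z-1) ≤ 1/10)
    (hw : Complex.abs w ≤ 1/10 ∨ Complex.abs (w-1) ≤ 1/10) : False := by
  have T : ∀ u v : ℂ, Complex.abs (u + v) ≤ Complex.abs u + Complex.abs v :=
    fun u v => Complex.abs.add_le u v
  rcases hz with hz | hz <;> rcases hw with hw | hw
  · have h2 : (x-1)+(y-1)+z+w = -1 := by linear_combination hsum
    have h := (T ((x-1)+(y-1)+z) w).trans (by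
      have := (T ((x-1)+(y-1)) z).trans (by
        have := T (x-1) (y-1); linarith : Complex.abs ((x-1)+(y-1)) + Complex.abs z ≤ 3/10)
      linarith : Complex.abs ((x-1)+(y-1)+z) + Complex.abs w ≤ 4/10)
    rw [h2] at h
    simp at h
    linarith
  · have h2 : (x-1)+(y-1)+z+(w-1) = -2 := by linear_combination hsum
    have h := (T ((x-1)+(y-1)+z) (w-1)).trans (by
      have := (T ((x-1)+(y-1)) z).trans (by
        have := T (x-1) (y-1); linarith : Complex.abs ((x-1)+(y-1)) + Complex.abs z ≤ 3/10)
      linarith : Complex.abs ((x-1)+(y-1)+z) + Complex.abs (w-1) ≤ 4/10)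
    rw [h2] at h
    simp at h
    linarith
  · have h2 : (x-1)+(y-1)+(z-1)+w = -2 := by linear_combination hsum
    have h := (T ((x-1)+(y-1)+(z-1)) w).trans (by
      have := (T ((x-1)+(y-1)) (z-1)).trans (by
        have := T (x-1) (y-1); linarith : Complex.abs ((x-1)+(y-1)) + Complex.abs (z-1) ≤ 3/10)
      linarith : Complex.abs ((x-1)+(y-1)+(z-1)) + Complex.abs w ≤ 4/10)
    rw [h2] at h
    simp at h
    linarith
  · have h2 : (x-1)+(y-1)+(z-1)+(w-1) = -3 := by linear_combination hsum
    have h := (T ((x-1)+(y-1)+(z-1)) (w-1)).trans (by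
      have := (T ((x-1)+(y-1)) (z-1)).trans (by
        have := T (x-1) (y-1); linarith : Complex.abs ((x-1)+(y-1)) + Complex.abs (z-1) ≤ 3/10)
      linarith : Complex.abs ((x-1)+(y-1)+(z-1)) + Complex.abs (w-1) ≤ 4/10)
    rw [h2] at h
    simp at h
    linarith

lemma fourth_roots {z : ℂ} (h : z^4 = 1) :
    z = 1 ∨ z = Complex.I ∨ z = -1 ∨ z = -Complex.I := by
  have h4 : (z - 1)*(z + 1)*(z - Complex.I)*(z + Complex.I) = 0 := by
    linear_combination h + (1 - z^2) * Complex.I_sq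
  rcases mul_eq_zero.mp h4 with h' | h'
  · rcases mul_eq_zero.mp h' with h'' | h''
    · rcases mul_eq_zero.mp h'' with h3 | h3
      · exact Or.inl (by linear_combination h3)
      · exact Or.inr (Or.inr (Or.inl (by linear_combination h3)))
    · exact Or.inr (Or.inl (by linear_combination h''))
  · exact Or.inr (Or.inr (Or.inr (by linear_combination h')))

noncomputable def Gm (ρ : ℝ) (a v : ℂ) : ℂ :=
  1 + (ρ:ℂ) * (((starRingEnd ℂ) a)^2 * v - a * ((starRingEnd ℂ) a)^3) / v^3

lemma abs_ball_bounds {v : ℂ} (hv : Complex.abs (v - 1) ≤ 1/10) :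
    9/10 ≤ Complex.abs v ∧ Complex.abs v ≤ 11/10 := by
  have h1 := Complex.abs.add_le (v - 1) 1
  simp only [sub_add_cancel, map_one] at h1
  have h2 := Complex.abs.add_le (1 - v) v
  simp only [sub_add_cancel, map_one] at h2
  have h3 : Complex.abs (1 - v) = Complex.abs (v - 1) := by
    rw [show (1:ℂ) - v = -(v - 1) by ring, map_neg_eq_map]
  rw [h3] at h2
  exact ⟨by linarith, by linarith⟩

lemma Gm_sub_one (ρ : ℝ) (hρ0 : 0 ≤ ρ) (hρ1 : ρ ≤ 1) (a v : ℂ)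
    (ha : Complex.abs a ≤ 1/100) (hv : Complex.abs (v - 1) ≤ 1/10) :
    Complex.abs (Gm ρ a v - 1) ≤ 1/100 := by
  obtain ⟨hvl, hvu⟩ := abs_ball_bounds hv
  have hv0 : v ≠ 0 := by
    intro h; rw [h] at hvl; simp at hvl; linarith
  have key : (Gm ρ a v - 1) * v^3 =
      (ρ:ℂ) * (((starRingEnd ℂ) a)^2 * v - a * ((starRingEnd ℂ) a)^3) := by
    rw [Gm]; field_simp; ring
  have h2 := congrArg Complex.abs key
  rw [map_mul, map_mul, map_pow, Complex.abs_ofReal, _root_.abs_of_nonneg hρ0] at h2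
  have htri : Complex.abs (((starRingEnd ℂ) a)^2 * v - a * ((starRingEnd ℂ) a)^3)
      ≤ (1/100)^2 * (11/10) + (1/100)^4 := by
    have t1 := Complex.abs.add_le (((starRingEnd ℂ) a)^2 * v) (-(a * ((starRingEnd ℂ) a)^3))
    rw [map_neg_eq_map] at t1
    have e1 : Complex.abs (((starRingEnd ℂ) a)^2 * v) = (Complex.abs a)^2 * Complex.abs v := by
      rw [map_mul, map_pow, Complex.abs_conj]
    have e2 : Complex.abs (a * ((starRingEnd ℂ) a)^3) = (Complex.abs a)^4 := by
      rw [map_mul, map_pow, Complex.abs_conj]; ring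
    have ha0 : 0 ≤ Complex.abs a := Complex.abs.nonneg _
    have : ((starRingEnd ℂ) a)^2 * v - a * ((starRingEnd ℂ) a)^3
        = ((starRingEnd ℂ) a)^2 * v + -(a * ((starRingEnd ℂ) a)^3) := by ring
    rw [this]
    refine t1.trans ?_
    rw [e1, e2]
    nlinarith [pow_le_pow_left₀ ha0 ha 2, pow_le_pow_left₀ ha0 ha 4,
      sq_nonneg (Complex.abs a), pow_nonneg ha0 2]
  have hQ : (1:ℝ)/2 ≤ (Complex.abs v)^3 := by
    have := pow_le_pow_left₀ (by norm_num : (0:ℝ) ≤ 9/10) hvl 3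
    nlinarith
  have hX0 : 0 ≤ Complex.abs (Gm ρ a v - 1) := Complex.abs.nonneg _
  nlinarith [h2, mul_le_mul_of_nonneg_left htri hρ0,
    mul_le_mul_of_nonneg_left hQ hX0]


lemma abs_sub_le' (x y : ℂ) : Complex.abs (x - y) ≤ Complex.abs x + Complex.abs y := by
  rw [sub_eq_add_neg]
  refine (Complex.abs.add_le x (-y)).trans ?_
  rw [map_neg_eq_map]

lemma Gm_lip (ρ : ℝ) (hρ0 : 0 ≤ ρ) (hρ1 : ρ ≤ 1) (a a' v v' : ℂ)
    (ha : Complex.abs a ≤ 1/100) (ha' : Complex.abs a' ≤ 1/100)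
    (hv : Complex.abs (v - 1) ≤ 1/10) (hv' : Complex.abs (v' - 1) ≤ 1/10) :
    Complex.abs (Gm ρ a v - Gm ρ a' v') ≤
      (1/4) * Complex.abs (a - a') + (1/4) * Complex.abs (v - v') := by
  obtain ⟨hvl, hvu⟩ := abs_ball_bounds hv
  obtain ⟨hvl', hvu'⟩ := abs_ball_bounds hv'
  have hv0 : v ≠ 0 := by intro h; rw [h] at hvl; simp at hvl; linarith
  have hv0' : v' ≠ 0 := by intro h; rw [h] at hvl'; simp at hvl'; linarith
  set b := (starRingEnd ℂ) a with hb
  set b' := (starRingEnd ℂ) a' with hb'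
  have habsb : Complex.abs b = Complex.abs a := Complex.abs_conj a
  have habsb' : Complex.abs b' = Complex.abs a' := Complex.abs_conj a'
  have habsd : Complex.abs (b - b') = Complex.abs (a - a') := by
    rw [hb, hb', ← map_sub, Complex.abs_conj]
  set M1 : ℂ := ((b - b')*(b + b'))*v - ((a - a')*b^3 + a'*((b - b')*(b^2 + b*b' + b'^2)))
    with hM1
  set M2 : ℂ := b'^2 * (v * v' * ((v - v') * (v + v'))) -
      a'*b'^3*((v - v')*(v^2 + v*v' + v'^2)) with hM2
  have key : (Gm ρ a v - Gm ρ a' v') * (v^3 * v'^3) = (ρ:ℂ) * (M1 * v'^3 - M2) := by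
    rw [Gm, Gm, hM1, hM2, hb, hb']
    field_simp
    ring
  have h2 := congrArg Complex.abs key
  rw [map_mul, map_mul, map_mul, map_pow, map_pow, Complex.abs_ofReal,
    _root_.abs_of_nonneg hρ0] at h2
  have hda0 : 0 ≤ Complex.abs (a - a') := Complex.abs.nonneg _
  have hdv0 : 0 ≤ Complex.abs (v - v') := Complex.abs.nonneg _
  have ha0 : 0 ≤ Complex.abs a := Complex.abs.nonneg _
  have ha0' : 0 ≤ Complex.abs a' := Complex.abs.nonneg _
  have hbb' : Complex.abs (b + b') ≤ 1/50 := by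
    refine (Complex.abs.add_le b b').trans ?_
    rw [habsb, habsb']; linarith
  have hsq : Complex.abs (b^2 + b*b' + b'^2) ≤ 3*(1/100)^2 := by
    refine ((Complex.abs.add_le (b^2 + b*b') (b'^2)).trans ?_)
    have t := (Complex.abs.add_le (b^2) (b*b'))
    have e1 : Complex.abs (b^2) ≤ (1/100)^2 := by
      rw [map_pow, habsb]; exact pow_le_pow_left₀ ha0 ha 2
    have e2 : Complex.abs (b*b') ≤ (1/100)^2 := by
      rw [map_mul, habsb, habsb']
      calc Complex.abs a * Complex.abs a' ≤ (1/100) * (1/100) := by gcongr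
        _ = (1/100)^2 := by ring
    have e3 : Complex.abs (b'^2) ≤ (1/100)^2 := by
      rw [map_pow, habsb']; exact pow_le_pow_left₀ ha0' ha' 2
    linarith
  have hM1b : Complex.abs M1 ≤ (3/100) * Complex.abs (a - a') := by
    rw [hM1]
    refine (abs_sub_le' _ _).trans ?_
    have e1 : Complex.abs (((b - b')*(b + b'))*v) ≤ Complex.abs (a-a') * (1/50) * (11/10) := by
      rw [map_mul, map_mul, habsd]
      gcongr
    have t1 := Complex.abs.add_le ((a - a')*b^3) (a'*((b - b')*(b^2 + b*b' + b'^2)))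
    have e2 : Complex.abs ((a - a')*b^3) ≤ Complex.abs (a-a') * (1/100)^3 := by
      rw [map_mul, map_pow, habsb]
      gcongr
    have e3 : Complex.abs (a'*((b - b')*(b^2 + b*b' + b'^2)))
        ≤ (1/100) * (Complex.abs (a-a') * (3*(1/100)^2)) := by
      rw [map_mul, map_mul, habsd]
      gcongr
    nlinarith
  have hvv' : Complex.abs (v + v') ≤ 22/10 := by
    refine (Complex.abs.add_le v v').trans ?_; linarith
  have hsq' : Complex.abs (v^2 + v*v' + v'^2) ≤ 4 := by
    refine ((Complex.abs.add_le (v^2 + v*v') (v'^2)).trans ?_)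
    have t := (Complex.abs.add_le (v^2) (v*v'))
    have e1 : Complex.abs (v^2) ≤ (11/10)^2 := by
      rw [map_pow]; exact pow_le_pow_left₀ (Complex.abs.nonneg v) hvu 2
    have e2 : Complex.abs (v*v') ≤ (11/10)^2 := by
      rw [map_mul]
      calc Complex.abs v * Complex.abs v' ≤ (11/10) * (11/10) := by gcongr
        _ = (11/10)^2 := by ring
    have e3 : Complex.abs (v'^2) ≤ (11/10)^2 := by
      rw [map_pow]; exact pow_le_pow_left₀ (Complex.abs.nonneg v') hvu' 2
    nlinarith
  have hM2b : Complex.abs M2 ≤ (1/1000) * Complex.abs (v - v') := by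
    rw [hM2]
    refine (abs_sub_le' _ _).trans ?_
    have e1 : Complex.abs (b'^2 * (v * v' * ((v - v') * (v + v'))))
        ≤ (1/100)^2 * ((11/10) * (11/10) * (Complex.abs (v-v') * (22/10))) := by
      rw [map_mul, map_mul, map_mul, map_mul, map_pow, habsb']
      gcongr
    have e2 : Complex.abs (a'*b'^3*((v - v')*(v^2 + v*v' + v'^2)))
        ≤ (1/100) * (1/100)^3 * (Complex.abs (v-v') * 4) := by
      rw [map_mul, map_mul, map_mul, map_pow, habsb']
      gcongr
    nlinarith
  have hQ : (1:ℝ)/2 ≤ (Complex.abs v)^3 * (Complex.abs v')^3 := by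
    have q1 := pow_le_pow_left₀ (by norm_num : (0:ℝ) ≤ 9/10) hvl 3
    have q2 := pow_le_pow_left₀ (by norm_num : (0:ℝ) ≤ 9/10) hvl' 3
    nlinarith [pow_nonneg (Complex.abs.nonneg v) 3, pow_nonneg (Complex.abs.nonneg v') 3]
  have hRHS : Complex.abs (M1 * v'^3 - M2)
      ≤ (3/100)*Complex.abs (a-a')*(11/10)^3 + (1/1000)*Complex.abs (v-v') := by
    refine (abs_sub_le' _ _).trans ?_
    rw [map_mul, map_pow]
    have h3 : (Complex.abs v')^3 ≤ (11/10)^3 := pow_le_pow_left₀ (Complex.abs.nonneg v') hvu' 3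
    have : Complex.abs M1 * Complex.abs v' ^3 ≤ ((3/100)*Complex.abs (a-a')) * (11/10)^3 := by
      gcongr
    nlinarith
  have hX0 : 0 ≤ Complex.abs (Gm ρ a v - Gm ρ a' v') := Complex.abs.nonneg _
  have s1 := mul_le_mul_of_nonneg_left hQ hX0
  have s2 : ρ * Complex.abs (M1 * v'^3 - M2)
      ≤ 1 * ((3/100)*Complex.abs (a-a')*(11/10)^3 + (1/1000)*Complex.abs (v-v')) :=
    mul_le_mul hρ1 hRHS (Complex.abs.nonneg _) (by norm_num)
  nlinarith [s1, s2, h2]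

lemma build_factorization (r c : ℝ) (hr : 0 < r) (hrc : r < c) (a v : ℂ) (ha0 : a ≠ 0)
    (hv0 : v ≠ 0) (hG : Gm (r/c) a v = v) :
    ∃ η₀ η₁ η₂ : ℂ, ∀ w : ℂ,
      r*(w-a) + c*w^3*(1 - (starRingEnd ℂ) a * w) =
      -c * (starRingEnd ℂ) a * (w - v * ((starRingEnd ℂ) a)⁻¹) * (w-η₀) * (w-η₁) * (w-η₂) := by
  have hc0 : (0:ℝ) < c := by linarith
  have hcC : (c:ℂ) ≠ 0 := by exact_mod_cast hc0.ne'
  set b := (starRingEnd ℂ) a with hb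
  have hb0 : b ≠ 0 := by
    rw [hb]; simpa using ha0
  -- the fixed point equation cleared of denominators
  have hv4 : (c:ℂ)*(v^4 - v^3) = r*(b^2*v - a*b^3) := by
    have h1 : (1 : ℂ) + (((r/c : ℝ)):ℂ) * (b^2 * v - a * b^3) / v^3 = v := hG
    have h2 : (((r/c : ℝ)):ℂ) = (r:ℂ)/(c:ℂ) := by push_cast; ring
    rw [h2] at h1
    field_simp at h1
    linear_combination -h1
  -- peel off the large root
  have H : ∀ w : ℂ, b^3 * (r*(w-a) + c*w^3*(1 - b * w)) =
      -(b*w - v) * ((c:ℂ)*b^3*w^3 + c*b^2*(v-1)*w^2 + c*b*v*(v-1)*w +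
        ((c:ℂ)*v^2*(v-1) - r*b^2)) := by
    intro w
    linear_combination (-1 : ℂ) * hv4
  -- FTA for the cubic
  set A2 : ℂ := (c:ℂ)*b^3 with hA2
  have hA20 : A2 ≠ 0 := by
    rw [hA2]; exact mul_ne_zero hcC (pow_ne_zero 3 hb0)
  set p3 : Polynomial ℂ := C A2 * X^3 + C ((c:ℂ)*b^2*(v-1)) * X^2 +
    C ((c:ℂ)*b*v*(v-1)) * X + C ((c:ℂ)*v^2*(v-1) - r*b^2) with hp3
  have hdeg : 0 < p3.degree := by
    rw [hp3, Polynomial.degree_cubic hA20]; norm_num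
  obtain ⟨η₀, hη₀'⟩ := Complex.exists_root hdeg
  have hη₀ : A2*η₀^3 + (c:ℂ)*b^2*(v-1)*η₀^2 + (c:ℂ)*b*v*(v-1)*η₀ +
      ((c:ℂ)*v^2*(v-1) - r*b^2) = 0 := by
    have := hη₀'
    simp only [hp3, Polynomial.IsRoot, Polynomial.eval_add, Polynomial.eval_mul,
      Polynomial.eval_pow, Polynomial.eval_C, Polynomial.eval_X] at this
    linear_combination this
  set B2 : ℂ := (c:ℂ)*b^2*(v-1) + η₀*A2 with hB2
  set C2 : ℂ := (c:ℂ)*b*v*(v-1) + η₀*B2 with hC2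
  have Hcube : ∀ w : ℂ, (c:ℂ)*b^3*w^3 + c*b^2*(v-1)*w^2 + c*b*v*(v-1)*w +
      ((c:ℂ)*v^2*(v-1) - r*b^2) = (w - η₀) * (A2*w^2 + B2*w + C2) := by
    intro w
    rw [hC2, hB2, hA2]
    linear_combination hη₀
  -- FTA for the quadratic
  set p2 : Polynomial ℂ := C A2 * X^2 + C B2 * X + C C2 with hp2
  have hdeg2 : 0 < p2.degree := by
    rw [hp2, Polynomial.degree_quadratic hA20]; norm_num
  obtain ⟨η₁, hη₁'⟩ := Complex.exists_root hdeg2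
  have hη₁ : A2*η₁^2 + B2*η₁ + C2 = 0 := by
    have := hη₁'
    simp only [hp2, Polynomial.IsRoot, Polynomial.eval_add, Polynomial.eval_mul,
      Polynomial.eval_pow, Polynomial.eval_C, Polynomial.eval_X] at this
    linear_combination this
  set B3 : ℂ := B2 + A2*η₁ with hB3
  have Hquad : ∀ w : ℂ, A2*w^2 + B2*w + C2 = (w - η₁) * (A2*w + B3) := by
    intro w
    rw [hB3]
    linear_combination hη₁
  set η₂ : ℂ := -B3 * A2⁻¹ with hη₂
  have Hlin : ∀ w : ℂ, A2*w + B3 = A2 * (w - η₂) := by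
    intro w
    rw [hη₂]
    field_simp
    ring
  refine ⟨η₀, η₁, η₂, fun w => ?_⟩
  apply mul_left_cancel₀ (pow_ne_zero 3 hb0)
  have hζ : b * (w - v * b⁻¹) = b*w - v := by
    field_simp
  calc b^3 * ((r:ℂ)*(w-a) + c*w^3*(1 - b * w))
      = -(b*w - v) * ((w - η₀) * ((w - η₁) * (A2 * (w - η₂)))) := by
        rw [H w, Hcube w, Hquad w, Hlin w]
    _ = b^3 * (-c * b * (w - v * b⁻¹) * (w-η₀) * (w-η₁) * (w-η₂)) := by
        rw [← hζ, hA2]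
        ring

lemma fixed_point_exists_unique (ρ : ℝ) (hρ0 : 0 ≤ ρ) (hρ1 : ρ ≤ 1) (w₀ : ℂ) (R : ℝ)
    (hR : Complex.abs w₀ = R) (hR0 : 0 < R) (hRs : R ≤ 1/200) :
    ∃ p : ℂ × ℂ, (p.1 ∈ closedBall w₀ (R/4) ∧ p.2 ∈ closedBall (1:ℂ) (1/10)) ∧
      (w₀ * P34 p.2 = p.1 ∧ Gm ρ p.1 p.2 = p.2) ∧
      ∀ q : ℂ × ℂ, q.1 ∈ closedBall w₀ (R/4) → q.2 ∈ closedBall (1:ℂ) (1/10) →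
        w₀ * P34 q.2 = q.1 → Gm ρ q.1 q.2 = q.2 → q = p := by
  set D : Set (ℂ × ℂ) := (closedBall w₀ (R/4)) ×ˢ (closedBall (1:ℂ) (1/10)) with hD
  have habs_of_mem : ∀ x : ℂ, x ∈ closedBall w₀ (R/4) → Complex.abs x ≤ 1/100 := by
    intro x hx
    rw [mem_closedBall, Complex.dist_eq_abs] at hx
    have h1 := Complex.abs.add_le (x - w₀) w₀
    simp only [sub_add_cancel] at h1
    rw [hR] at h1
    linarith
  have hvball : ∀ v : ℂ, v ∈ closedBall (1:ℂ) (1/10) → Complex.abs (v - 1) ≤ 1/10 := by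
    intro v hv; rwa [mem_closedBall, Complex.dist_eq_abs] at hv
  have hmaps : ∀ p : ℂ × ℂ, p ∈ D → (w₀ * P34 p.2, Gm ρ p.1 p.2) ∈ D := by
    rintro ⟨a, v⟩ hp
    obtain ⟨hpa, hpv⟩ := Set.mem_prod.mp hp
    constructor
    · rw [mem_closedBall, Complex.dist_eq_abs]
      have h1 : w₀ * P34 v - w₀ = w₀ * (P34 v - 1) := by ring
      rw [h1, map_mul, hR]
      have h2 : Complex.abs (P34 v - 1) ≤ 2 * Complex.abs (v - 1) := by
        have := P34_lip hpv (mem_closedBall_self (by norm_num) : (1:ℂ) ∈ closedBall 1 (1/10))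
        simpa [P34_one, Complex.norm_eq_abs] using this
      have h3 := hvball v hpv
      nlinarith
    · rw [mem_closedBall, Complex.dist_eq_abs]
      have := Gm_sub_one ρ hρ0 hρ1 a v (habs_of_mem a hpa) (hvball v hpv)
      linarith
  haveI : Nonempty D := ⟨⟨(w₀, 1), by
    constructor
    · exact mem_closedBall_self (by positivity)
    · exact mem_closedBall_self (by norm_num)⟩⟩
  have hDc : IsClosed D := IsClosed.prod isClosed_closedBall isClosed_closedBall
  haveI : CompleteSpace D := hDc.completeSpace_coe
  set f : D → D := fun p => ⟨(w₀ * P34 (p : ℂ × ℂ).2, Gm ρ (p : ℂ × ℂ).1 (p : ℂ × ℂ).2),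
    hmaps _ p.2⟩ with hf
  have hdist : ∀ p q : D, dist (f p) (f q) ≤ (1/2) * dist p q := by
    rintro ⟨⟨a, v⟩, hp⟩ ⟨⟨a', v'⟩, hq⟩
    obtain ⟨hpa, hpv⟩ := Set.mem_prod.mp hp
    obtain ⟨hqa, hqv⟩ := Set.mem_prod.mp hq
    rw [Subtype.dist_eq, Subtype.dist_eq, Prod.dist_eq, Prod.dist_eq]
    simp only [hf]
    rw [Complex.dist_eq_abs, Complex.dist_eq_abs, Complex.dist_eq_abs, Complex.dist_eq_abs]
    have hda : Complex.abs (a - a') ≤ max (Complex.abs (a - a')) (Complex.abs (v - v')) :=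
      le_max_left _ _
    have hdv : Complex.abs (v - v') ≤ max (Complex.abs (a - a')) (Complex.abs (v - v')) :=
      le_max_right _ _
    have h1 : Complex.abs (w₀ * P34 v - w₀ * P34 v')
        ≤ (1/2) * max (Complex.abs (a - a')) (Complex.abs (v - v')) := by
      have e1 : w₀ * P34 v - w₀ * P34 v' = w₀ * (P34 v - P34 v') := by ring
      rw [e1, map_mul, hR]
      have h2 : Complex.abs (P34 v - P34 v') ≤ 2 * Complex.abs (v - v') := by
        simpa [Complex.norm_eq_abs] using P34_lip hpv hqv
      have h0 : 0 ≤ Complex.abs (v - v') := Complex.abs.nonneg _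
      nlinarith
    have h2 : Complex.abs (Gm ρ a v - Gm ρ a' v')
        ≤ (1/2) * max (Complex.abs (a - a')) (Complex.abs (v - v')) := by
      have := Gm_lip ρ hρ0 hρ1 a a' v v' (habs_of_mem a hpa) (habs_of_mem a' hqa)
        (hvball v hpv) (hvball v' hqv)
      linarith
    exact max_le h1 h2
  have hCW : ContractingWith (1/2 : NNReal) f := by
    constructor
    · rw [← NNReal.coe_lt_coe]; norm_num
    · apply LipschitzWith.of_dist_le_mul
      intro p q
      have := hdist p q
      push_cast
      linarith
  set p₀ := hCW.fixedPoint f with hp₀  -- check arg order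
  have hfix : Function.IsFixedPt f p₀ := hCW.fixedPoint_isFixedPt
  refine ⟨(p₀ : ℂ × ℂ), Set.mem_prod.mp p₀.2, ?_, ?_⟩
  · have := congrArg (Subtype.val) hfix
    exact ⟨(congrArg Prod.fst this), (congrArg Prod.snd this)⟩
  · intro q hq1 hq2 hT1 hT2
    have hqD : q ∈ D := Set.mem_prod.mpr ⟨hq1, hq2⟩
    have : Function.IsFixedPt f ⟨q, hqD⟩ := by
      apply Subtype.ext
      simp only [hf]
      exact Prod.ext hT1 hT2
    have := hCW.fixedPoint_unique this
    exact congrArg Subtype.val this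

lemma membership_lemma (r c ε βr q θ : ℝ) (w₀ aa vv : ℂ)
    (hr : 0 < r) (hrc : r < c)
    (hε0 : 0 < ε) (hε1 : ε ≤ 1/100) (hε2 : 3*ε*c ≤ c - r)
    (hβr0 : 0 < βr) (hβrε : βr ≤ ε/2)
    (hKr : βr^4 * (r^4*q^2/c^3) = 1)
    (hw₀ : Complex.abs w₀ = βr)
    (hw₀4 : w₀^4 = ((βr^4 : ℝ):ℂ) * Complex.exp (6*θ*Complex.I))
    (haball : aa ∈ closedBall w₀ (βr/4)) (hvball : vv ∈ closedBall (1:ℂ) (1/10))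
    (hfix1 : w₀ * P34 vv = aa) (hfix2 : Gm (r/c) aa vv = vv) :
    0 < Complex.abs aa ∧ Complex.abs aa < 1 ∧
      ∃ η₀ η₁ η₂ ζ : ℂ,
        Complex.abs η₀ < 1 ∧ Complex.abs η₁ < 1 ∧ Complex.abs η₂ < 1 ∧
        1 < Complex.abs ζ ∧
        (∀ w : ℂ,
          r * (w - aa) + c * w ^ 3 * (1 - (starRingEnd ℂ) aa * w) =
            -c * (starRingEnd ℂ) aa * (w - ζ) * (w - η₀) * (w - η₁) * (w - η₂)) ∧
        aa * r * ((q : ℝ) : ℂ) ^ 2 * (η₀ * η₁ * η₂) ^ 3 =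
          Complex.exp (6 * θ * Complex.I) := by
  have hc0 : (0:ℝ) < c := lt_trans hr hrc
  -- bounds on aa
  rw [mem_closedBall, Complex.dist_eq_abs] at haball
  rw [mem_closedBall, Complex.dist_eq_abs] at hvball
  have haau : Complex.abs aa ≤ (5/4)*βr := by
    have h := Complex.abs.add_le (aa - w₀) w₀
    simp only [sub_add_cancel] at h
    rw [hw₀] at h; linarith
  have haal : (3/4)*βr ≤ Complex.abs aa := by
    have h := Complex.abs.add_le (w₀ - aa) aa
    simp only [sub_add_cancel] at h
    have h2 : Complex.abs (w₀ - aa) = Complex.abs (aa - w₀) := by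
      rw [show w₀ - aa = -(aa - w₀) by ring, map_neg_eq_map]
    rw [hw₀, h2] at h; linarith
  have haaε : Complex.abs aa ≤ ε := by nlinarith
  have haa0 : (0:ℝ) < Complex.abs aa := by nlinarith
  have haa1 : Complex.abs aa < 1 := by nlinarith
  have haane : aa ≠ 0 := by
    intro h; rw [h] at haa0; simp at haa0
  refine ⟨haa0, haa1, ?_⟩
  -- bounds on vv
  obtain ⟨hv9, hv11⟩ := abs_ball_bounds hvball
  have hv0 : vv ≠ 0 := by
    intro h; rw [h] at hv9; simp at hv9; linarith
  set b := (starRingEnd ℂ) aa with hb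
  have hb0 : b ≠ 0 := by rw [hb]; simpa using haane
  have habsb : Complex.abs b = Complex.abs aa := Complex.abs_conj aa
  -- factorization
  obtain ⟨η₀, η₁, η₂, hid⟩ := build_factorization r c hr hrc aa vv haane hv0 hfix2
  set ζ : ℂ := vv * b⁻¹ with hζ
  have hbζ : b * ζ = vv := by rw [hζ]; field_simp
  have habsζ : 1 < Complex.abs ζ := by
    have h1 : Complex.abs b * Complex.abs ζ = Complex.abs vv := by
      rw [← map_mul, hbζ]
    by_contra h
    push_neg at h
    have : Complex.abs b * Complex.abs ζ ≤ (1/100) * 1 := by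
      apply mul_le_mul _ h (Complex.abs.nonneg _) (by norm_num)
      rw [habsb]; linarith
    rw [h1] at this; linarith
  -- roots of Xi
  have hroot : ∀ j : ℂ, (j = η₀ ∨ j = η₁ ∨ j = η₂) →
      r*(j-aa) + c*j^3*(1 - b * j) = 0 := by
    intro j hj
    rcases hj with h | h | h <;> (rw [h, hid]; ring)
  have hρle : 8*(r/c) ≤ 8 := by
    have : r/c ≤ 1 := by rw [div_le_one hc0]; linarith
    linarith
  have hDisj : ∀ j : ℂ, (j = η₀ ∨ j = η₁ ∨ j = η₂) →
      (Complex.abs (b*j) ≤ 1/10 ∨ Complex.abs (b*j - 1) ≤ 1/10) := by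
    intro j hj
    rcases root_dichotomy r c ε aa j hr hrc hε0 hε1 hε2 haaε (hroot j hj) with h | ⟨_, h⟩
    · left
      rw [map_mul, habsb]
      nlinarith [Complex.abs.nonneg j]
    · right
      refine h.trans ?_
      nlinarith [sq_nonneg (Complex.abs aa)]
  have hsum := fact_sum r c aa ζ η₀ η₁ η₂ hc0 hid
  rw [← hb] at hsum
  have hsum' : vv + b*η₀ + b*η₁ + b*η₂ = 1 := by
    linear_combination hsum - hbζ
  have hvv1 : Complex.abs (vv - 1) ≤ 1/10 := hvball
  have hsmall : ∀ j : ℂ, (j = η₀ ∨ j = η₁ ∨ j = η₂) → Complex.abs j < 1 := by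
    intro j hj
    by_contra hbig
    rcases root_dichotomy r c ε aa j hr hrc hε0 hε1 hε2 haaε (hroot j hj) with h | ⟨_, h⟩
    · exact hbig h
    have hyj : Complex.abs (b*j - 1) ≤ 1/10 := by
      refine h.trans ?_
      nlinarith [sq_nonneg (Complex.abs aa)]
    rcases hj with rfl | rfl | rfl
    · exact sum_contradiction vv (b*j) (b*η₁) (b*η₂) hsum' hvv1 hyj
        (hDisj η₁ (Or.inr (Or.inl rfl))) (hDisj η₂ (Or.inr (Or.inr rfl)))
    · exact sum_contradiction vv (b*j) (b*η₀) (b*η₂) (by linear_combination hsum') hvv1 hyj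
        (hDisj η₀ (Or.inl rfl)) (hDisj η₂ (Or.inr (Or.inr rfl)))
    · exact sum_contradiction vv (b*j) (b*η₀) (b*η₁) (by linear_combination hsum') hvv1 hyj
        (hDisj η₀ (Or.inl rfl)) (hDisj η₁ (Or.inr (Or.inl rfl)))
  refine ⟨η₀, η₁, η₂, ζ, hsmall η₀ (Or.inl rfl), hsmall η₁ (Or.inr (Or.inl rfl)),
    hsmall η₂ (Or.inr (Or.inr rfl)), habsζ, hid, ?_⟩
  -- the constraint equation
  have hprod := fact_prod r c aa ζ η₀ η₁ η₂ hid
  rw [← hb] at hprod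
  have hfp' : (c:ℂ)*vv*(η₀*η₁*η₂) = r*aa := by
    linear_combination hprod - (c:ℂ)*(η₀*η₁*η₂)*hbζ
  have hP4 : (P34 vv)^4 = vv^3 := P34_pow hv0
  have ha4 : aa^4 = ((βr^4 : ℝ):ℂ) * Complex.exp (6*θ*Complex.I) * vv^3 := by
    rw [← hfix1, mul_pow, hw₀4, hP4]
  have hKrC : ((βr:ℝ):ℂ)^4 * ((r:ℂ)^4*(q:ℂ)^2/(c:ℂ)^3) = 1 := by
    have := congrArg (fun x : ℝ => (x : ℂ)) hKr
    push_cast at this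
    convert this using 2
  have hcvv : ((c:ℂ)*vv)^3 ≠ 0 := by
    apply pow_ne_zero
    exact mul_ne_zero (by exact_mod_cast hc0.ne') hv0
  apply mul_right_cancel₀ hcvv
  have e1 : (η₀*η₁*η₂)^3*((c:ℂ)*vv)^3 = ((r:ℂ)*aa)^3 := by
    rw [← mul_pow, show (η₀*η₁*η₂)*((c:ℂ)*vv) = (c:ℂ)*vv*(η₀*η₁*η₂) by ring, hfp']
  have hcC : (c:ℂ) ≠ 0 := by exact_mod_cast hc0.ne'
  calc aa * r * ((q : ℝ) : ℂ) ^ 2 * (η₀ * η₁ * η₂) ^ 3 * ((c:ℂ)*vv)^3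
      = aa * r * ((q : ℝ) : ℂ) ^ 2 * ((r:ℂ)*aa)^3 := by
        rw [mul_assoc (aa * r * ((q : ℝ) : ℂ) ^ 2), e1]
    _ = (r:ℂ)^4 * ((q : ℝ) : ℂ)^2 * aa^4 := by ring
    _ = (r:ℂ)^4 * ((q : ℝ) : ℂ)^2 * (((βr^4 : ℝ):ℂ) * Complex.exp (6*θ*Complex.I) * vv^3) := by
        rw [ha4]
    _ = Complex.exp (6 * θ * Complex.I) * ((c:ℂ)*vv)^3 := by
        have e2 : (r:ℂ)^4 * ((q : ℝ) : ℂ)^2 * ((βr^4 : ℝ):ℂ) = (c:ℂ)^3 := by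
          have h3 : ((βr^4:ℝ):ℂ) = ((βr:ℝ):ℂ)^4 := by push_cast; ring
          rw [h3]
          field_simp at hKrC
          linear_combination hKrC
        push_cast
        push_cast at e2
        linear_combination Complex.exp (6 * θ * Complex.I) * vv^3 * e2

lemma classification_lemma (r c ε βr q θ : ℝ) (β x : ℂ)
    (hr : 0 < r) (hrc : r < c)
    (hε0 : 0 < ε) (hε1 : ε ≤ 1/100) (hε2 : 3*ε*c ≤ c - r)
    (hβr0 : 0 < βr) (hβrε : βr ≤ ε/2) (hq0 : 0 < q)
    (hKr : βr^4 * (r^4*q^2/c^3) = 1)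
    (hexcl : 2*(1/ε+3)^3*c^3 ≤ ε*r^4*q^2)
    (hβabs : Complex.abs β = βr)
    (hβ4 : β^4 = ((βr^4 : ℝ):ℂ) * Complex.exp (6*θ*Complex.I))
    (hx0 : 0 < Complex.abs x) (hx1 : Complex.abs x < 1)
    (η₀ η₁ η₂ ζ : ℂ) (hsm0 : Complex.abs η₀ < 1) (hsm1 : Complex.abs η₁ < 1)
    (hsm2 : Complex.abs η₂ < 1) (hζbig : 1 < Complex.abs ζ)
    (hid : ∀ w : ℂ, r * (w - x) + c * w ^ 3 * (1 - (starRingEnd ℂ) x * w) =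
      -c * (starRingEnd ℂ) x * (w - ζ) * (w - η₀) * (w - η₁) * (w - η₂))
    (hcon : x * r * ((q : ℝ) : ℂ) ^ 2 * (η₀ * η₁ * η₂) ^ 3 =
      Complex.exp (6 * θ * Complex.I)) :
    ∃ k : ℕ, k < 4 ∧ ∃ v : ℂ, x ∈ closedBall (Complex.I^k * β) (βr/4) ∧
      v ∈ closedBall (1:ℂ) (1/10) ∧ (Complex.I^k * β) * P34 v = x ∧ Gm (r/c) x v = v := by
  have hc0 : (0:ℝ) < c := lt_trans hr hrc
  have hxne : x ≠ 0 := by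
    intro h; rw [h] at hx0; simp at hx0
  set b := (starRingEnd ℂ) x with hb
  have hb0 : b ≠ 0 := by rw [hb]; simpa using hxne
  have habsb : Complex.abs b = Complex.abs x := Complex.abs_conj x
  have hsum := fact_sum r c x ζ η₀ η₁ η₂ hc0 hid
  have hprod := fact_prod r c x ζ η₀ η₁ η₂ hid
  rw [← hb] at hsum hprod
  have habsexp : Complex.abs (Complex.exp (6 * θ * Complex.I)) = 1 := by
    rw [show (6 : ℂ) * θ * Complex.I = ((6*θ : ℝ):ℂ) * Complex.I by push_cast; ring]
    exact Complex.abs_exp_ofReal_mul_I _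
  set X := Complex.abs x with hX
  set Z := Complex.abs ζ with hZ
  set E0 := Complex.abs η₀ with hE0
  set E1 := Complex.abs η₁ with hE1
  set E2 := Complex.abs η₂ with hE2
  have hE00 : 0 ≤ E0 := Complex.abs.nonneg _
  have hE10 : 0 ≤ E1 := Complex.abs.nonneg _
  have hE20 : 0 ≤ E2 := Complex.abs.nonneg _
  have hZ0 : 0 ≤ Z := Complex.abs.nonneg _
  -- |prod| relation
  have hZE : c * (Z * (E0 * E1 * E2)) = r := by
    have h := congrArg Complex.abs hprod
    simp only [map_mul, Complex.abs_ofReal] at h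
    rw [habsb, abs_of_pos hc0, abs_of_pos hr] at h
    have h' : X * (c * (Z * (E0 * E1 * E2))) = X * r := by linear_combination h
    exact mul_left_cancel₀ (ne_of_gt hx0) h'
  -- |constraint| relation
  have hcabs : X * r * q^2 * (E0 * E1 * E2)^3 = 1 := by
    have h := congrArg Complex.abs hcon
    simp only [map_mul, map_pow, Complex.abs_ofReal] at h
    rw [habsexp, abs_of_pos hr, abs_of_pos hq0] at h
    linear_combination h
  -- step 1 : |x| ≤ ε
  have hXε : X ≤ ε := by
    by_contra hgt
    push_neg at hgt
    have hrw : b*ζ = 1 - (b*η₀ + b*η₁ + b*η₂) := by linear_combination hsum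
    have habsXZ : X * Z ≤ 1 + 3*X := by
      have h1 : Complex.abs (b*ζ) = X*Z := by rw [map_mul, habsb]
      have h2 : Complex.abs (1 - (b*η₀ + b*η₁ + b*η₂)) ≤ 1 + 3*X := by
        refine (abs_sub_le' _ _).trans ?_
        have t1 := (Complex.abs.add_le (b*η₀ + b*η₁) (b*η₂))
        have t2 := (Complex.abs.add_le (b*η₀) (b*η₁))
        have e0 : Complex.abs (b*η₀) ≤ X := by
          rw [map_mul, habsb]; nlinarith
        have e1 : Complex.abs (b*η₁) ≤ X := by
          rw [map_mul, habsb]; nlinarith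
        have e2 : Complex.abs (b*η₂) ≤ X := by
          rw [map_mul, habsb]; nlinarith
        simp only [map_one]
        linarith
      rw [← h1, hrw]
      exact h2
    have hZbound : Z < 1/ε + 3 := by
      have h1ε : 1 < X * (1/ε) := by
        rw [show X * (1/ε) = X/ε by ring]
        exact (one_lt_div hε0).mpr hgt
      by_contra hZb
      push_neg at hZb
      nlinarith
    have hXr4 : X * r^4 * q^2 = c^3 * Z^3 := by
      linear_combination (c^3*Z^3) * hcabs -
        (X*r*q^2*((c*Z*(E0*E1*E2))^2 + c*Z*(E0*E1*E2)*r + r^2)) * hZE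
    have hZ3 : Z^3 < (1/ε+3)^3 := by
      have := pow_lt_pow_left₀ hZbound hZ0 (n := 3) (by norm_num)
      exact this
    have hq2 : 0 < q^2 := by positivity
    have hr4 : 0 < r^4 := by positivity
    nlinarith [hXr4, hZ3, hexcl, mul_lt_mul_of_pos_left hZ3 (pow_pos hc0 3),
      mul_pos (mul_pos (sub_pos.mpr hgt) hr4) hq2, mul_pos (mul_pos hε0 hr4) hq2]
  -- step 2 : identify x with a fixed point
  have hζroot : (r:ℂ) * (ζ - x) + c * ζ^3*(1 - b*ζ) = 0 := by
    rw [hb]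
    linear_combination hid ζ
  set v : ℂ := b*ζ with hv
  have hv1 : Complex.abs (v - 1) ≤ 8*ε^2 := by
    rcases root_dichotomy r c ε x ζ hr hrc hε0 hε1 hε2 (by rw [← hX]; exact hXε)
      (by rw [← hb]; linear_combination hζroot) with h | ⟨_, h⟩
    · exact absurd h (by rw [← hZ]; linarith)
    · rw [hv, hb]
      refine h.trans ?_
      have hrc1 : r/c ≤ 1 := by rw [div_le_one hc0]; linarith
      have : (Complex.abs x)^2 ≤ ε^2 := by nlinarith
      nlinarith [sq_nonneg (Complex.abs x), div_pos hr hc0]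
  have hv110 : Complex.abs (v - 1) ≤ 1/10 := by nlinarith
  obtain ⟨hv9, hv11⟩ := abs_ball_bounds hv110
  have hv0 : v ≠ 0 := by
    intro h; rw [h] at hv9; simp at hv9; linarith
  have hv4 : (c:ℂ)*(v^4 - v^3) = r*(b^2*v - x*b^3) := by
    rw [hv]
    linear_combination (-(b:ℂ)^3) * hζroot
  have hcast : ((r/c : ℝ):ℂ) = (r:ℂ)/(c:ℂ) := by push_cast; ring
  have hcC : (c:ℂ) ≠ 0 := by exact_mod_cast hc0.ne'
  have hGv : Gm (r/c) x v = v := by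
    rw [Gm, hcast, ← hb]
    field_simp
    linear_combination hv4 + 2*((b:ℂ)^3) * hζroot
  have hfp' : (c:ℂ)*v*(η₀*η₁*η₂) = r*x := by
    rw [hv]
    linear_combination hprod
  have e2 : (r:ℂ)^4*((q:ℝ):ℂ)^2*((βr^4:ℝ):ℂ) = (c:ℂ)^3 := by
    have := congrArg (fun y : ℝ => (y : ℂ)) hKr
    push_cast at this
    have h3 : ((βr^4:ℝ):ℂ) = ((βr:ℝ):ℂ)^4 := by push_cast; ring
    rw [h3]
    field_simp at this
    linear_combination this
  have hrq0 : (r:ℂ)^4*((q:ℝ):ℂ)^2 ≠ 0 := by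
    apply mul_ne_zero
    · exact pow_ne_zero 4 (by exact_mod_cast hr.ne')
    · exact pow_ne_zero 2 (by exact_mod_cast hq0.ne')
  have hx4 : x^4 = ((βr^4 : ℝ):ℂ) * Complex.exp (6*θ*Complex.I) * v^3 := by
    apply mul_left_cancel₀ hrq0
    have expand : (r:ℂ)^4*((q:ℝ):ℂ)^2 * (((βr^4 : ℝ):ℂ) * Complex.exp (6*θ*Complex.I) * v^3)
        = (c:ℂ)^3 * Complex.exp (6*θ*Complex.I) * v^3 := by
      linear_combination (Complex.exp (6*θ*Complex.I) * v^3) * e2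
    rw [expand]
    linear_combination ((c:ℂ)^3*v^3) * hcon -
      (x*(r:ℂ)*((q:ℝ):ℂ)^2*(((r:ℂ)*x)^2 + (r:ℂ)*x*((c:ℂ)*v*(η₀*η₁*η₂)) +
        ((c:ℂ)*v*(η₀*η₁*η₂))^2)) * hfp'
  have hP4 : (P34 v)^4 = v^3 := P34_pow hv0
  have hβ0 : β ≠ 0 := by
    intro h; rw [h] at hβabs; simp at hβabs; rw [← hβabs] at hβr0; simp at hβr0
  have hβP0 : β * P34 v ≠ 0 := mul_ne_zero hβ0 (P34_ne_zero v)
  have hBP4 : (β * P34 v)^4 = ((βr^4 : ℝ):ℂ) * Complex.exp (6*θ*Complex.I) * v^3 := by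
    rw [mul_pow, hβ4, hP4]
  have hz4 : (x * (β * P34 v)⁻¹)^4 = 1 := by
    rw [mul_pow, inv_pow, hBP4, ← hx4]
    exact mul_inv_cancel₀ (pow_ne_zero 4 hxne)
  have hxk : ∃ k : ℕ, k < 4 ∧ x = Complex.I^k * (β * P34 v) := by
    have hdiv : ∀ u : ℂ, x * (β * P34 v)⁻¹ = u → x = u * (β * P34 v) := by
      intro u hu
      rw [show x * (β * P34 v)⁻¹ = x / (β * P34 v) by ring, div_eq_iff hβP0] at hu
      exact hu
    rcases fourth_roots hz4 with h | h | h | h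
    · refine ⟨0, by norm_num, ?_⟩
      rw [pow_zero, one_mul]
      have := hdiv 1 h
      rw [one_mul] at this
      exact this
    · exact ⟨1, by norm_num, by rw [pow_one]; exact hdiv Complex.I h⟩
    · refine ⟨2, by norm_num, ?_⟩
      rw [show Complex.I^2 = -1 from Complex.I_sq]
      exact hdiv (-1) h
    · refine ⟨3, by norm_num, ?_⟩
      rw [show Complex.I^3 = -Complex.I by rw [pow_succ, Complex.I_sq]; ring]
      exact hdiv (-Complex.I) h
  obtain ⟨k, hk4, hxval⟩ := hxk
  have hvmem : v ∈ closedBall (1:ℂ) (1/10) := by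
    rw [mem_closedBall, Complex.dist_eq_abs]; exact hv110
  have habsIk : Complex.abs (Complex.I^k * β) = βr := by
    rw [map_mul, map_pow, Complex.abs_I, one_pow, one_mul, hβabs]
  refine ⟨k, hk4, v, ?_, hvmem, by rw [hxval]; ring, hGv⟩
  rw [mem_closedBall, Complex.dist_eq_abs]
  have hdiff : x - Complex.I^k * β = (Complex.I^k * β) * (P34 v - 1) := by
    rw [hxval]; ring
  rw [hdiff, map_mul, habsIk]
  have hlip : Complex.abs (P34 v - 1) ≤ 2 * Complex.abs (v - 1) := by
    have := P34_lip hvmem (mem_closedBall_self (by norm_num) : (1:ℂ) ∈ closedBall 1 (1/10))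
    simpa [P34_one, Complex.norm_eq_abs] using this
  have hε2' : 16 * ε^2 ≤ 1/4 := by nlinarith
  nlinarith [Complex.abs.nonneg (P34 v - 1), Complex.abs.nonneg (v-1)]

lemma I_pow_diff (k l : ℕ) (hk : k < 4) (hl : l < 4) (hkl : k ≠ l) :
    1 ≤ Complex.abs (Complex.I^k - Complex.I^l) := by
  have hre : ∀ z : ℂ, 1 ≤ |z.re| → 1 ≤ Complex.abs z :=
    fun z h => le_trans h (Complex.abs_re_le_abs z)
  have him : ∀ z : ℂ, 1 ≤ |z.im| → 1 ≤ Complex.abs z :=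
    fun z h => le_trans h (Complex.abs_im_le_abs z)
  have hI0 : Complex.I^0 = 1 := pow_zero _
  have hI1 : Complex.I^1 = Complex.I := pow_one _
  have hI2 : Complex.I^2 = -1 := Complex.I_sq
  have hI3 : Complex.I^3 = -Complex.I := by rw [pow_succ, hI2]; ring
  interval_cases k <;> interval_cases l <;>
    first
    | exact absurd rfl hkl
    | (rw [hI0, hI1]; apply hre; norm_num [Complex.sub_re, Complex.I_re, Complex.one_re])
    | (rw [hI0, hI2]; apply hre; norm_num [Complex.sub_re, Complex.one_re])
    | (rw [hI0, hI3]; apply hre; norm_num [Complex.sub_re, Complex.I_im, Complex.one_re])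
    | (rw [hI1, hI0]; apply hre; norm_num [Complex.sub_re, Complex.I_re, Complex.one_re])
    | (rw [hI1, hI2]; apply hre; norm_num [Complex.sub_re, Complex.I_re, Complex.one_re])
    | (rw [hI1, hI3]; apply him; norm_num [Complex.sub_im, Complex.I_im])
    | (rw [hI2, hI0]; apply hre; norm_num [Complex.sub_re, Complex.one_re])
    | (rw [hI2, hI1]; apply hre; norm_num [Complex.sub_re, Complex.I_re, Complex.one_re])
    | (rw [hI2, hI3]; apply hre; norm_num [Complex.sub_re, Complex.I_re, Complex.one_re])
    | (rw [hI3, hI0]; apply hre; norm_num [Complex.sub_re, Complex.I_im, Complex.one_re])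
    | (rw [hI3, hI1]; apply him; norm_num [Complex.sub_im, Complex.I_im])
    | (rw [hI3, hI2]; apply hre; norm_num [Complex.sub_re, Complex.I_re, Complex.one_re])


/-- Proposition `m=2`: for `t` small enough and any `θ`, equation (cond2) with
`I = ∅` has exactly four solutions `a` in the punctured unit disc. -/
theorem stmt_7 (r c : ℝ) (hr : 0 < r) (hrc : r < c) :
    ∃ t₀ ∈ Set.Ioo (0 : ℝ) 1, ∀ t ∈ Set.Ioo (0 : ℝ) t₀, ∀ θ : ℝ,
      {a : ℂ | 0 < ‖a‖ ∧ ‖a‖ < 1 ∧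
        ∃ η₀ η₁ η₂ ζ : ℂ,
          ‖η₀‖ < 1 ∧ ‖η₁‖ < 1 ∧ ‖η₂‖ < 1 ∧
          1 < ‖ζ‖ ∧
          (∀ w : ℂ,
            r * (w - a) + c * w ^ 3 * (1 - (starRingEnd ℂ) a * w) =
              -c * (starRingEnd ℂ) a * (w - ζ) * (w - η₀) * (w - η₁) * (w - η₂)) ∧
          a * r * (((1 - t : ℝ) / t : ℝ) : ℂ) ^ 2 * (η₀ * η₁ * η₂) ^ 3 =
            Complex.exp (6 * θ * Complex.I)}.ncard = 4 := by
  have hc0 : (0:ℝ) < c := lt_trans hr hrc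
  set ε := min (1/100 : ℝ) ((c-r)/(3*c)) with hεdef
  have hε0 : 0 < ε := lt_min (by norm_num) (div_pos (by linarith) (by positivity))
  have hε1 : ε ≤ 1/100 := min_le_left _ _
  have hε2 : 3*ε*c ≤ c - r := by
    have h := min_le_right (1/100 : ℝ) ((c-r)/(3*c))
    have h2 : 3*ε*c ≤ 3*((c-r)/(3*c))*c := by nlinarith
    calc 3*ε*c ≤ 3*((c-r)/(3*c))*c := h2
      _ = c - r := by field_simp
  set B := 16*c^3/(r^4*ε^4) + 2*(1/ε+3)^3*c^3/(ε*r^4) + 1 with hBdef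
  have hBp1 : 0 < 16*c^3/(r^4*ε^4) := by positivity
  have hBp2 : 0 < 2*(1/ε+3)^3*c^3/(ε*r^4) := by positivity
  have hB1 : 1 ≤ B := by rw [hBdef]; linarith
  have hB0 : 0 < B := by linarith
  refine ⟨min (1/2) (1/(1+B)), ⟨lt_min (by norm_num) (by positivity),
    lt_of_le_of_lt (min_le_left _ _) (by norm_num)⟩, ?_⟩
  intro t ht θ
  obtain ⟨ht0, ht1⟩ := ht
  set q := (1-t)/t with hqdef
  have ht12 : t < 1/2 := lt_of_lt_of_le ht1 (min_le_left _ _)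
  have htB : t < 1/(1+B) := lt_of_lt_of_le ht1 (min_le_right _ _)
  have hq0 : 0 < q := div_pos (by linarith) ht0
  have hqB : B < q := by
    rw [hqdef, lt_div_iff₀ ht0]
    have h1 : t*(1+B) < 1 := (lt_div_iff₀ (by positivity)).mp htB
    nlinarith
  have hκB : B ≤ q^2 := by nlinarith
  set Kr := r^4*q^2/c^3 with hKrdef
  have hq20 : 0 < q^2 := by positivity
  have hKr0 : 0 < Kr := by rw [hKrdef]; positivity
  set βr := Kr ^ (-(1/4:ℝ)) with hβrdef
  have hβr0 : 0 < βr := Real.rpow_pos_of_pos hKr0 _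
  have hβr4Kr : βr^4 * Kr = 1 := by
    have h1 : βr^(4:ℕ) = Kr ^ ((-(1/4:ℝ))*(4:ℕ)) := by
      rw [hβrdef, ← Real.rpow_natCast (Kr ^ (-(1/4:ℝ))) 4, ← Real.rpow_mul hKr0.le]
    rw [h1]
    norm_num
    rw [Real.rpow_neg_one]
    exact inv_mul_cancel₀ hKr0.ne'
  have hKrc : βr^4 * (r^4*q^2/c^3) = 1 := by rw [← hKrdef]; exact hβr4Kr
  have hβrε : βr ≤ ε/2 := by
    have hq2B : 16*c^3/(r^4*ε^4) ≤ q^2 := le_trans (by rw [hBdef]; linarith) hκB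
    have h2 : 16*c^3 ≤ q^2 * (r^4*ε^4) := by
      rw [div_le_iff₀ (by positivity)] at hq2B; linarith
    have hKrε : 1 ≤ Kr * (ε/2)^4 := by
      have he : Kr * (ε/2)^4 = (q^2*(r^4*ε^4))/(16*c^3) := by
        rw [hKrdef]; field_simp; ring
      rw [he, le_div_iff₀ (by positivity)]
      linarith
    have h1 : βr^4 ≤ (ε/2)^4 := by nlinarith
    exact le_of_pow_le_pow_left₀ (by norm_num) (by positivity) h1
  have hβr200 : βr ≤ 1/200 := by linarith
  have hexcl : 2*(1/ε+3)^3*c^3 ≤ ε*r^4*q^2 := by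
    have hq2B : 2*(1/ε+3)^3*c^3/(ε*r^4) ≤ q^2 := le_trans (by rw [hBdef]; linarith) hκB
    rw [div_le_iff₀ (by positivity)] at hq2B
    nlinarith
  -- the complex β
  set β : ℂ := ((βr:ℝ):ℂ) * Complex.exp ((((3/2)*θ : ℝ):ℂ) * Complex.I) with hβdef
  have hβabs : Complex.abs β = βr := by
    rw [hβdef, map_mul, Complex.abs_ofReal, Complex.abs_exp_ofReal_mul_I,
      abs_of_pos hβr0]
    ring
  have hβ4 : β^4 = ((βr^4:ℝ):ℂ) * Complex.exp (6*θ*Complex.I) := by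
    rw [hβdef, mul_pow]
    have h1 : Complex.exp ((((3/2)*θ : ℝ):ℂ) * Complex.I)^4
        = Complex.exp (6*θ*Complex.I) := by
      rw [← Complex.exp_nat_mul]
      congr 1
      push_cast
      ring
    rw [h1]
    push_cast
    ring
  have hI4 : Complex.I^4 = 1 := by
    rw [show (4:ℕ) = 2+2 by norm_num, pow_add, Complex.I_sq]
    norm_num
  have habsw₀ : ∀ k : ℕ, Complex.abs (Complex.I^k * β) = βr := by
    intro k
    rw [map_mul, map_pow, Complex.abs_I, one_pow, one_mul, hβabs]
  have hw₀4 : ∀ k : ℕ, (Complex.I^k * β)^4 = ((βr^4:ℝ):ℂ) * Complex.exp (6*θ*Complex.I) := by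
    intro k
    rw [mul_pow, ← pow_mul, mul_comm k 4, pow_mul, hI4, one_pow, one_mul, hβ4]
  have hρ0 : (0:ℝ) ≤ r/c := by positivity
  have hρ1 : r/c ≤ 1 := le_of_lt ((div_lt_one hc0).mpr hrc)
  have hfpk : ∀ k : ℕ, ∃ p : ℂ × ℂ,
      (p.1 ∈ closedBall (Complex.I^k * β) (βr/4) ∧ p.2 ∈ closedBall (1:ℂ) (1/10)) ∧
      ((Complex.I^k * β) * P34 p.2 = p.1 ∧ Gm (r/c) p.1 p.2 = p.2) ∧
      ∀ q' : ℂ × ℂ, q'.1 ∈ closedBall (Complex.I^k * β) (βr/4) →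
        q'.2 ∈ closedBall (1:ℂ) (1/10) →
        (Complex.I^k * β) * P34 q'.2 = q'.1 → Gm (r/c) q'.1 q'.2 = q'.2 → q' = p :=
    fun k => fixed_point_exists_unique (r/c) hρ0 hρ1 (Complex.I^k * β) βr
      (habsw₀ k) hβr0 hβr200
  choose p hp1 hp2 hp3 using hfpk
  -- the four candidate points
  have hmem : ∀ k : ℕ, 0 < Complex.abs (p k).1 ∧ Complex.abs (p k).1 < 1 ∧
      ∃ η₀ η₁ η₂ ζ : ℂ,
        Complex.abs η₀ < 1 ∧ Complex.abs η₁ < 1 ∧ Complex.abs η₂ < 1 ∧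
        1 < Complex.abs ζ ∧
        (∀ w : ℂ,
          r * (w - (p k).1) + c * w ^ 3 * (1 - (starRingEnd ℂ) (p k).1 * w) =
            -c * (starRingEnd ℂ) (p k).1 * (w - ζ) * (w - η₀) * (w - η₁) * (w - η₂)) ∧
        (p k).1 * r * ((q : ℝ) : ℂ) ^ 2 * (η₀ * η₁ * η₂) ^ 3 =
          Complex.exp (6 * θ * Complex.I) :=
    fun k => membership_lemma r c ε βr q θ (Complex.I^k * β) (p k).1 (p k).2
      hr hrc hε0 hε1 hε2 hβr0 hβrε hKrc (habsw₀ k) (hw₀4 k) (hp1 k).1 (hp1 k).2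
      (hp2 k).1 (hp2 k).2
  -- set equality
  have hSeq : {a : ℂ | 0 < ‖a‖ ∧ ‖a‖ < 1 ∧
      ∃ η₀ η₁ η₂ ζ : ℂ,
        ‖η₀‖ < 1 ∧ ‖η₁‖ < 1 ∧ ‖η₂‖ < 1 ∧
        1 < ‖ζ‖ ∧
        (∀ w : ℂ,
          r * (w - a) + c * w ^ 3 * (1 - (starRingEnd ℂ) a * w) =
            -c * (starRingEnd ℂ) a * (w - ζ) * (w - η₀) * (w - η₁) * (w - η₂)) ∧
        a * r * ((q : ℝ) : ℂ) ^ 2 * (η₀ * η₁ * η₂) ^ 3 =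
          Complex.exp (6 * θ * Complex.I)}
      = {(p 0).1, (p 1).1, (p 2).1, (p 3).1} := by
    ext x
    constructor
    · rintro ⟨hx0, hx1, η₀, η₁, η₂, ζ, hsm0, hsm1, hsm2, hζbig, hid, hcon⟩
      obtain ⟨k, hk4, v, hball, hvball, hfix1, hfix2⟩ :=
        classification_lemma r c ε βr q θ β x hr hrc hε0 hε1 hε2 hβr0 hβrε hq0
          hKrc hexcl hβabs hβ4 hx0 hx1 η₀ η₁ η₂ ζ hsm0 hsm1 hsm2 hζbig hid hcon
      have hxp : (x, v) = p k := hp3 k (x, v) hball hvball hfix1 hfix2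
      have hxk : x = (p k).1 := by rw [← hxp]
      interval_cases k
      · exact Or.inl hxk
      · exact Or.inr (Or.inl hxk)
      · exact Or.inr (Or.inr (Or.inl hxk))
      · exact Or.inr (Or.inr (Or.inr hxk))
    · intro hx
      rcases hx with h | h | h | h <;>
        (rw [h]; exact hmem _)
  rw [hSeq]
  -- the four points are distinct
  have habsdiff : ∀ k l : ℕ, k < 4 → l < 4 → k ≠ l →
      βr ≤ Complex.abs (Complex.I^k * β - Complex.I^l * β) := by
    intro k l hk hl hkl
    have h1 : Complex.I^k * β - Complex.I^l * β = (Complex.I^k - Complex.I^l) * β := by ring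
    rw [h1, map_mul, hβabs]
    have h2 : 1 ≤ Complex.abs (Complex.I^k - Complex.I^l) := I_pow_diff k l hk hl hkl
    nlinarith
  have hne : ∀ k l : ℕ, k < 4 → l < 4 → k ≠ l → (p k).1 ≠ (p l).1 := by
    intro k l hk hl hkl heq
    have h1 := (hp1 k).1
    have h2 := (hp1 l).1
    rw [mem_closedBall, Complex.dist_eq_abs] at h1 h2
    rw [heq] at h1
    have h3 := habsdiff k l hk hl hkl
    have h4 := Complex.abs.add_le (Complex.I^k * β - (p l).1) ((p l).1 - Complex.I^l * β)
    have h5 : Complex.I^k * β - (p l).1 + ((p l).1 - Complex.I^l * β)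
        = Complex.I^k * β - Complex.I^l * β := by ring
    rw [h5] at h4
    have h6 : Complex.abs (Complex.I^k * β - (p l).1) = Complex.abs ((p l).1 - Complex.I^k * β) := by
      rw [show Complex.I^k * β - (p l).1 = -((p l).1 - Complex.I^k * β) by ring, map_neg_eq_map]
    rw [h6] at h4
    linarith
  -- count
  have h01 : (p 0).1 ≠ (p 1).1 := hne 0 1 (by norm_num) (by norm_num) (by norm_num)
  have h02 : (p 0).1 ≠ (p 2).1 := hne 0 2 (by norm_num) (by norm_num) (by norm_num)
  have h03 : (p 0).1 ≠ (p 3).1 := hne 0 3 (by norm_num) (by norm_num) (by norm_num)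
  have h12 : (p 1).1 ≠ (p 2).1 := hne 1 2 (by norm_num) (by norm_num) (by norm_num)
  have h13 : (p 1).1 ≠ (p 3).1 := hne 1 3 (by norm_num) (by norm_num) (by norm_num)
  have h23 : (p 2).1 ≠ (p 3).1 := hne 2 3 (by norm_num) (by norm_num) (by norm_num)
  rw [Set.ncard_insert_of_notMem (by simp [h01, h02, h03])
    ((Set.finite_singleton _).insert _ |>.insert _),
    Set.ncard_insert_of_notMem (by simp [h12, h13]) ((Set.finite_singleton _).insert _),
    Set.ncard_insert_of_notMem (by simp [h23]) (Set.finite_singleton _),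
    Set.ncard_singleton]
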